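/- The maximum over all real Euler angles (α₁,β₁,γ₁,α₂,β₂,γ₂) ∈ ℝ⁶ of the measurement-assisted transition probability P_{1→2}^{(2)}(U(α₁,β₁,γ₁), U(α₂,β₂,γ₂)) equals 1/2; i.e., when the intermediate measurement is of the population of state |2⟩, the maximal transition probability from |1⟩ to |2⟩ is 1/2 (the same as with no measurement at all). -/

import Mathlib

open Matrix

/-- Measurement-assisted transition probability `P_{1→k}^{(j)}`:
indices are 0-based, so state `|1⟩` is index `0`, state `|2⟩` is index `1`,
state `|3⟩` is index `2`.  Here `ρ = U₁|1⟩⟨1|U₁†`, `P = |j⟩⟨j|`, and the value is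
`⟨k| U₂ (P ρ P + (I−P) ρ (I−P)) U₂† |k⟩` (a real number). -/
noncomputable def measProb (j k : Fin 3) (U₁ U₂ : Matrix (Fin 3) (Fin 3) ℂ) : ℝ :=
  let ρ : Matrix (Fin 3) (Fin 3) ℂ := U₁ * Matrix.single 0 0 1 * U₁ᴴ
  let P : Matrix (Fin 3) (Fin 3) ℂ := Matrix.single j j 1
  ((U₂ * (P * ρ * P + (1 - P) * ρ * (1 - P)) * U₂ᴴ) k k).re

/-- The Wigner matrix `U(α,β,γ)` of the spin-1 `ZYZ` Euler parameterization. -/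
noncomputable def Umat (α β γ : ℝ) : Matrix (Fin 3) (Fin 3) ℂ :=
  !![Complex.exp (-Complex.I * (↑α + ↑γ)) * (Real.cos (β/2) : ℂ)^2,
       -(Complex.exp (-Complex.I * ↑α) / (Real.sqrt 2 : ℂ)) * (Real.sin β : ℂ),
       Complex.exp (-Complex.I * (↑α - ↑γ)) * (Real.sin (β/2) : ℂ)^2;
     (Complex.exp (-Complex.I * ↑γ) / (Real.sqrt 2 : ℂ)) * (Real.sin β : ℂ),
       (Real.cos β : ℂ),
       -(Complex.exp (Complex.I * ↑γ) / (Real.sqrt 2 : ℂ)) * (Real.sin β : ℂ);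
     Complex.exp (Complex.I * (↑α - ↑γ)) * (Real.sin (β/2) : ℂ)^2,
       (Complex.exp (Complex.I * ↑α) / (Real.sqrt 2 : ℂ)) * (Real.sin β : ℂ),
       Complex.exp (Complex.I * (↑α + ↑γ)) * (Real.cos (β/2) : ℂ)^2]

set_option maxHeartbeats 1000000 in
/-- Closed form: the dephased transition probability decomposes into the
population term through `|2⟩` and the coherent term through `{|1⟩,|3⟩}`. -/
lemma measProb_eq' (U₁ U₂ : Matrix (Fin 3) (Fin 3) ℂ) :
    measProb 1 1 U₁ U₂
    = Complex.normSq (U₂ 1 1 * U₁ 1 0)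
      + Complex.normSq (U₂ 1 0 * U₁ 0 0 + U₂ 1 2 * U₁ 2 0) := by
  have h : (Complex.normSq (U₂ 1 1 * U₁ 1 0)
      + Complex.normSq (U₂ 1 0 * U₁ 0 0 + U₂ 1 2 * U₁ 2 0) : ℝ)
      = ((U₂ 1 1 * U₁ 1 0) * star (U₂ 1 1 * U₁ 1 0)
        + (U₂ 1 0 * U₁ 0 0 + U₂ 1 2 * U₁ 2 0) * star (U₂ 1 0 * U₁ 0 0 + U₂ 1 2 * U₁ 2 0)).re := by
    simp [Complex.normSq_apply]; ring
  rw [measProb, h]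
  congr 1
  simp only [Matrix.mul_apply, Fin.sum_univ_three, Matrix.conjTranspose_apply,
    Matrix.add_apply, Matrix.sub_apply, Matrix.one_apply, Matrix.single,
    Matrix.of_apply]
  simp (config := { decide := true }) only [Fin.isValue, if_true, if_false, and_self, and_false,
    false_and, ite_true, ite_false]
  simp only [star_add, StarMul.star_mul]
  ring

lemma U00 (α β γ : ℝ) :
    Umat α β γ 0 0 = Complex.exp (-Complex.I * (↑α + ↑γ)) * (Real.cos (β/2) : ℂ)^2 := by
  simp [Umat]
lemma U10 (α β γ : ℝ) :
    Umat α β γ 1 0 = (Complex.exp (-Complex.I * ↑γ) / (Real.sqrt 2 : ℂ)) * (Real.sin β : ℂ) := by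
  simp [Umat]
lemma U20 (α β γ : ℝ) :
    Umat α β γ 2 0 = Complex.exp (Complex.I * (↑α - ↑γ)) * (Real.sin (β/2) : ℂ)^2 := by
  simp [Umat]
lemma U11 (α β γ : ℝ) : Umat α β γ 1 1 = (Real.cos β : ℂ) := by simp [Umat]
lemma U12 (α β γ : ℝ) :
    Umat α β γ 1 2 = -(Complex.exp (Complex.I * ↑γ) / (Real.sqrt 2 : ℂ)) * (Real.sin β : ℂ) := by
  simp [Umat]

/-- the maximum over all real Euler angles of the
measurement-assisted transition probability
`P_{1→2}^{(2)}(U(α₁,β₁,γ₁), U(α₂,β₂,γ₂))` (intermediate measurement of the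
population of state `|2⟩`) equals `1/2`.
(0-based indices: `j = 1` is `|2⟩`, `k = 1` is `|2⟩`.) -/
theorem stmt19 :
    IsGreatest
      {x : ℝ | ∃ α₁ β₁ γ₁ α₂ β₂ γ₂ : ℝ,
        x = measProb 1 1 (Umat α₁ β₁ γ₁) (Umat α₂ β₂ γ₂)}
      (1/2) := by
  constructor
  · refine ⟨0, 0, 0, 0, Real.pi/2, 0, ?_⟩
    rw [measProb_eq', U11, U10, U10, U00, U12, U20]
    norm_num [Complex.normSq_div, Complex.normSq_ofReal, Real.mul_self_sqrt]
  · rintro x ⟨a1, b1, g1, a2, b2, g2, rfl⟩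
    rw [measProb_eq']
    have hz : Complex.normSq (Umat a2 b2 g2 1 1 * Umat a1 b1 g1 1 0)
        = (Real.cos b2)^2 * ((Real.sin b1)^2 / 2) := by
      rw [U11, U10, Complex.normSq_eq_norm_sq]
      simp only [norm_mul, norm_div, Complex.norm_exp, Complex.norm_real, Real.norm_eq_abs]
      have he : Real.exp ((-Complex.I * (↑g1:ℂ)).re) = 1 := by simp
      rw [he, abs_of_nonneg (Real.sqrt_nonneg 2)]
      rw [mul_pow, mul_pow, div_pow, Real.sq_sqrt (by norm_num : (0:ℝ) ≤ 2), sq_abs, sq_abs]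
      ring
    have hw : Complex.normSq (Umat a2 b2 g2 1 0 * Umat a1 b1 g1 0 0
        + Umat a2 b2 g2 1 2 * Umat a1 b1 g1 2 0) ≤ (Real.sin b2)^2 / 2 := by
      rw [Complex.normSq_eq_norm_sq, U10, U00, U12, U20]
      have habs : ‖(Complex.exp (-Complex.I * ↑g2) / (Real.sqrt 2 : ℂ)) * (Real.sin b2 : ℂ)
            * (Complex.exp (-Complex.I * (↑a1 + ↑g1)) * (Real.cos (b1/2) : ℂ)^2)
          + (-(Complex.exp (Complex.I * ↑g2) / (Real.sqrt 2 : ℂ)) * (Real.sin b2 : ℂ))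
            * (Complex.exp (Complex.I * (↑a1 - ↑g1)) * (Real.sin (b1/2) : ℂ)^2)‖
          ≤ |Real.sin b2| / Real.sqrt 2 := by
        refine le_trans (norm_add_le _ _) ?_
        simp only [norm_mul, norm_div, norm_neg, norm_pow, Complex.norm_exp,
          Complex.norm_real, Real.norm_eq_abs]
        have h1 : Real.exp ((-Complex.I * (↑g2:ℂ)).re) = 1 := by simp
        have h2 : Real.exp ((-Complex.I * ((↑a1:ℂ) + ↑g1)).re) = 1 := by simp
        have h3 : Real.exp ((Complex.I * (↑g2:ℂ)).re) = 1 := by simp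
        have h4 : Real.exp ((Complex.I * ((↑a1:ℂ) - ↑g1)).re) = 1 := by simp
        rw [h1, h2, h3, h4, abs_of_nonneg (Real.sqrt_nonneg 2), sq_abs, sq_abs]
        have hcs := Real.sin_sq_add_cos_sq (b1/2)
        have key : ((Real.sqrt 2)⁻¹ * |Real.sin b2|)
            * (Real.sin (b1/2)^2 + Real.cos (b1/2)^2)
            = (Real.sqrt 2)⁻¹ * |Real.sin b2| := by rw [hcs]; ring
        ring_nf at key ⊢
        linarith [key]
      calc ‖_‖ ^ 2 ≤ (|Real.sin b2| / Real.sqrt 2)^2 := by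
            exact pow_le_pow_left₀ (norm_nonneg _) habs 2
        _ = (Real.sin b2)^2 / 2 := by
            rw [div_pow, sq_abs, Real.sq_sqrt (by norm_num : (0:ℝ) ≤ 2)]
    have h1 : (Real.sin b1)^2 ≤ 1 := Real.sin_sq_le_one b1
    have h2 : (Real.sin b2)^2 + (Real.cos b2)^2 = 1 := Real.sin_sq_add_cos_sq b2
    nlinarith [sq_nonneg (Real.cos b2), sq_nonneg (Real.sin b1), sq_nonneg (Real.sin b2)]
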